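/- For every finite simple undirected graph G on n vertices without isolated vertices and every damping factor c ∈ (0,1), any vector R ∈ ℝ^n satisfying the graph-normalized PageRank equation R_k = c·Σ_{j=1}^n P_{jk}·R_j + (1−c) for all k is componentwise bounded by the degree vector: R_i ≤ d_i for every vertex i. -/

import Mathlib

/-- **PageRank is at most the degree.** For every finite simple undirected graph on `n`
vertices without isolated vertices (adjacency matrix `A` with `0/1` entries, symmetric,
zero diagonal, degrees `d i = ∑ j, A i j ≥ 1`) and every damping factor `c ∈ (0,1)`,
any vector `R` satisfying the graph-normalized PageRank equation
`R k = c * ∑ j, (A j k / d j) * R j + (1 - c)` satisfies `R i ≤ d i` for every vertex `i`. -/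
theorem pagerank_le_degree
    {n : ℕ} (A : Fin n → Fin n → ℝ)
    (hA01 : ∀ i j, A i j = 0 ∨ A i j = 1)
    (hAsymm : ∀ i j, A i j = A j i)
    (hAdiag : ∀ i, A i i = 0)
    (d : Fin n → ℝ) (hd : ∀ i, d i = ∑ j, A i j)
    (hd1 : ∀ i, 1 ≤ d i)
    (c : ℝ) (hc0 : 0 < c) (hc1 : c < 1)
    (R : Fin n → ℝ)
    (hR : ∀ k, R k = c * ∑ j, (A j k / d j) * R j + (1 - c)) :
    ∀ i, R i ≤ d i := by
  intro i
  have hdpos : ∀ j, (0:ℝ) < d j := fun j => lt_of_lt_of_le one_pos (hd1 j)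
  obtain ⟨k, -, hk⟩ := Finset.exists_max_image Finset.univ (fun j => R j / d j)
    ⟨i, Finset.mem_univ i⟩
  have hA0 : ∀ a b, (0:ℝ) ≤ A a b := fun a b => by rcases hA01 a b with h | h <;> simp [h]
  set M := R k / d k with hM
  have hsum : ∑ j, (A j k / d j) * R j ≤ ∑ j, A j k * M := by
    apply Finset.sum_le_sum
    intro j _
    have h1 : (A j k / d j) * R j = A j k * (R j / d j) := by ring
    rw [h1]
    exact mul_le_mul_of_nonneg_left (hk j (Finset.mem_univ j)) (hA0 j k)
  have hdk : ∑ j, A j k = d k := by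
    rw [hd k]; exact Finset.sum_congr rfl fun j _ => hAsymm j k
  have hsum2 : ∑ j, A j k * M = d k * M := by rw [← Finset.sum_mul, hdk]
  have hRk : R k = M * d k := by
    have := (hdpos k).ne'
    rw [hM, div_mul_cancel₀ _ this]
  have hstep : M * d k ≤ c * (d k * M) + (1 - c) := by
    calc M * d k = R k := hRk.symm
      _ = c * ∑ j, (A j k / d j) * R j + (1 - c) := hR k
      _ ≤ c * (d k * M) + (1 - c) := by
          have h := hsum.trans_eq hsum2
          nlinarith
  have hMdk : M * d k ≤ 1 := by nlinarith
  have hMle : M ≤ 1 := by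
    by_contra h
    push_neg at h
    nlinarith [hd1 k]
  have hiM : R i / d i ≤ M := hk i (Finset.mem_univ i)
  have : R i / d i ≤ 1 := hiM.trans hMle
  exact (div_le_one (hdpos i)).mp this
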